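/- With notation as in the context, the pairing [·,·] induces a well-defined perfect 𝒪-bilinear pairing C_0^λ(M₁) × C_0^{λ̃}(M₂) → E/𝒪, given on classes by (e·m₁ mod (eM₁ ∩ M₁), ẽ·m₂ mod (ẽM₂ ∩ M₂)) ↦ [e·m₁, ẽ·m₂] mod 𝒪; consequently η_λ(M₁) = η_{λ̃}(M₂). -/

import Mathlib

/-- The 0-th Fitting ideal of a module `N` over a commutative ring `R`. -/
def fittingIdeal (R : Type*) [CommRing R] (N : Type*) [AddCommGroup N] [Module R N] :
    Ideal R :=
  Ideal.span { r : R | ∃ (n : ℕ) (π : (Fin n → R) →ₗ[R] N) (_ : Function.Surjective π)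
    (A : Matrix (Fin n) (Fin n) R), (∀ j, π (fun i => A i j) = 0) ∧ r = A.det }

/-- The `𝒪`-submodule `e·M` of `M_E`. -/
noncomputable def eMsub {O TE M ME : Type*} [CommRing O] [CommRing TE] [Algebra O TE]
    [AddCommGroup M] [Module O M] [AddCommGroup ME] [Module O ME] [Module TE ME]
    [IsScalarTower O TE ME] (e : TE) (iota : M →ₗ[O] ME) : Submodule O ME :=
  Submodule.span O {x : ME | ∃ m : M, x = e • iota m}

/-- The congruence module `C₀^λ(M) = e·M/(e·M ∩ M)`, formed inside `M_E`. -/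
noncomputable abbrev C0M {O TE M ME : Type*} [CommRing O] [CommRing TE] [Algebra O TE]
    [AddCommGroup M] [Module O M] [AddCommGroup ME] [Module O ME] [Module TE ME]
    [IsScalarTower O TE ME] (e : TE) (iota : M →ₗ[O] ME) :=
  ↥(eMsub e iota) ⧸
    (Submodule.comap (eMsub e iota).subtype (eMsub e iota ⊓ LinearMap.range iota))

/-- The class of `e·m` in `C₀^λ(M)`. -/
noncomputable def clsM {O TE M ME : Type*} [CommRing O] [CommRing TE] [Algebra O TE]
    [AddCommGroup M] [Module O M] [AddCommGroup ME] [Module O ME] [Module TE ME]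
    [IsScalarTower O TE ME] (e : TE) (iota : M →ₗ[O] ME) (m : M) : C0M e iota :=
  Submodule.Quotient.mk ⟨e • iota m, Submodule.subset_span ⟨m, rfl⟩⟩

section Helpers

variable {O TE M ME : Type*} [CommRing O] [CommRing TE] [Algebra O TE]
    [AddCommGroup M] [Module O M] [AddCommGroup ME] [Module O ME] [Module TE ME]
    [IsScalarTower O TE ME] (e : TE) (iota : M →ₗ[O] ME)

/-- `m ↦ e • iota m` as an `O`-linear map. -/
noncomputable def jmap : M →ₗ[O] ME where
  toFun m := e • iota m
  map_add' x y := by simp only [map_add, smul_add]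
  map_smul' a x := by
    show e • iota (a • x) = _ • (e • iota x)
    rw [map_smul, smul_comm, RingHom.id_apply]

@[simp] lemma jmap_apply (m : M) : jmap e iota m = e • iota m := rfl

lemma mem_eMsub {x : ME} : x ∈ eMsub e iota ↔ ∃ m : M, x = e • iota m := by
  constructor
  · intro hx
    have hle : eMsub e iota ≤ LinearMap.range (jmap e iota) := by
      rw [eMsub, Submodule.span_le]
      rintro y ⟨m, rfl⟩
      exact ⟨m, rfl⟩
    obtain ⟨m, hm⟩ := hle hx
    exact ⟨m, hm.symm⟩
  · rintro ⟨m, rfl⟩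
    exact Submodule.subset_span ⟨m, rfl⟩

/-- `m ↦ e • iota m` as a map into the submodule `eMsub`. -/
noncomputable def jsub : M →ₗ[O] ↥(eMsub e iota) :=
  (jmap e iota).codRestrict _ (fun m => (mem_eMsub e iota).2 ⟨m, rfl⟩)

@[simp] lemma jsub_coe (m : M) : ((jsub e iota m : ↥(eMsub e iota)) : ME) = e • iota m := rfl

lemma jsub_surjective : Function.Surjective (jsub e iota) := by
  rintro ⟨x, hx⟩
  obtain ⟨m, rfl⟩ := (mem_eMsub e iota).1 hx
  exact ⟨m, Subtype.ext rfl⟩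

lemma clsM_surjective (z : C0M e iota) : ∃ m, z = clsM e iota m := by
  obtain ⟨y, rfl⟩ := Submodule.Quotient.mk_surjective _ z
  obtain ⟨m, rfl⟩ := jsub_surjective e iota y
  exact ⟨m, by rw [clsM]; congr 1⟩

end Helpers

lemma fittingIdeal_le_of_equiv {R : Type*} [CommRing R] {A B : Type*} [AddCommGroup A]
    [Module R A] [AddCommGroup B] [Module R B] (g : A ≃ₗ[R] B) :
    fittingIdeal R A ≤ fittingIdeal R B := by
  rw [fittingIdeal, Ideal.span_le]
  rintro r ⟨n, π, hπ, Amat, hcol, rfl⟩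
  apply Ideal.subset_span
  refine ⟨n, g.toLinearMap ∘ₗ π, g.surjective.comp hπ, Amat, fun j => ?_, rfl⟩
  rw [LinearMap.comp_apply, hcol j, map_zero]

lemma fittingIdeal_congr {R : Type*} [CommRing R] {N N' : Type*} [AddCommGroup N] [Module R N]
    [AddCommGroup N'] [Module R N'] (f : N ≃ₗ[R] N') :
    fittingIdeal R N = fittingIdeal R N' :=
  le_antisymm (fittingIdeal_le_of_equiv f) (fittingIdeal_le_of_equiv f.symm)


section Dual

open DirectSum

universe u

variable {O : Type u} [CommRing O] [IsDomain O]
    {E : Type*} [Field E] [Algebra O E] [IsFractionRing O E]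

lemma homQuot_equiv (a : O) (ha : a ≠ 0) :
    Nonempty (((O ⧸ Submodule.span O {a}) →ₗ[O] (E ⧸ LinearMap.range (Algebra.linearMap O E)))
      ≃ₗ[O] (O ⧸ Submodule.span O {a})) := by
  have hinj := IsFractionRing.injective O E
  have hte : algebraMap O E a ≠ 0 := fun h => ha (hinj (by rw [h, map_zero]))
  set Q := E ⧸ LinearMap.range (Algebra.linearMap O E) with hQ
  let μ : O →ₗ[O] O →ₗ[O] Q := LinearMap.mk₂ O
    (fun o u => Submodule.Quotient.mk (algebraMap O E (o * u) * (algebraMap O E a)⁻¹))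
    (fun o₁ o₂ u => by rw [add_mul, map_add, add_mul, Submodule.Quotient.mk_add])
    (fun c o u => by
      rw [smul_eq_mul, mul_assoc, map_mul, mul_assoc, ← Algebra.smul_def,
        Submodule.Quotient.mk_smul])
    (fun o u₁ u₂ => by rw [mul_add, map_add, add_mul, Submodule.Quotient.mk_add])
    (fun c o u => by
      rw [smul_eq_mul, show o * (c * u) = c * (o * u) by ring, map_mul, mul_assoc,
        ← Algebra.smul_def, Submodule.Quotient.mk_smul])
  have hμ : ∀ o u : O, (o ∈ Submodule.span O {a} ∨ u ∈ Submodule.span O {a}) → μ o u = 0 := by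
    intro o u h
    have : ∃ c : O, o * u = c * a := by
      rcases h with h | h
      · obtain ⟨c, hc⟩ := Submodule.mem_span_singleton.1 h
        exact ⟨c * u, by rw [← hc, smul_eq_mul]; ring⟩
      · obtain ⟨c, hc⟩ := Submodule.mem_span_singleton.1 h
        exact ⟨o * c, by rw [← hc, smul_eq_mul]; ring⟩
    obtain ⟨c, hc⟩ := this
    show Submodule.Quotient.mk _ = (0 : Q)
    rw [Submodule.Quotient.mk_eq_zero]
    refine ⟨c, ?_⟩
    rw [Algebra.linearMap_apply, hc, map_mul, mul_assoc, mul_inv_cancel₀ hte, mul_one]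
  let g : O →ₗ[O] (O ⧸ Submodule.span O {a}) →ₗ[O] Q :=
    { toFun := fun o => Submodule.liftQ _ (μ o) (fun u hu => hμ o u (Or.inr hu))
      map_add' := fun o₁ o₂ => by
        apply LinearMap.ext; intro z
        obtain ⟨u, rfl⟩ := Submodule.Quotient.mk_surjective _ z
        simp only [Submodule.liftQ_apply, map_add, LinearMap.add_apply]; rfl
      map_smul' := fun c o => by
        apply LinearMap.ext; intro z
        obtain ⟨u, rfl⟩ := Submodule.Quotient.mk_surjective _ z
        simp only [Submodule.liftQ_apply, map_smul, RingHom.id_apply, LinearMap.smul_apply]; rfl }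
  let Φ : (O ⧸ Submodule.span O {a}) →ₗ[O] (O ⧸ Submodule.span O {a}) →ₗ[O] Q :=
    Submodule.liftQ _ g (by
      intro o ho
      apply LinearMap.ext; intro z
      obtain ⟨u, rfl⟩ := Submodule.Quotient.mk_surjective _ z
      show μ o u = 0
      exact hμ o u (Or.inl ho))
  have hΦapp : ∀ o u : O, Φ (Submodule.Quotient.mk o) (Submodule.Quotient.mk u) =
      Submodule.Quotient.mk (algebraMap O E (o * u) * (algebraMap O E a)⁻¹) := by
    intro o u; rfl
  have hbij : Function.Bijective Φ := by
    constructor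
    · rw [← LinearMap.ker_eq_bot]
      rw [Submodule.eq_bot_iff]
      intro z hz
      rw [LinearMap.mem_ker] at hz
      obtain ⟨o, rfl⟩ := Submodule.Quotient.mk_surjective _ z
      have h1 : Φ (Submodule.Quotient.mk o) (Submodule.Quotient.mk (1 : O)) = 0 := by
        rw [hz]; rfl
      rw [hΦapp, mul_one] at h1
      rw [Submodule.Quotient.mk_eq_zero] at h1
      obtain ⟨v, hv⟩ := h1
      rw [Algebra.linearMap_apply] at hv
      have : algebraMap O E (v * a) = algebraMap O E o := by
        rw [map_mul, hv, mul_assoc, inv_mul_cancel₀ hte, mul_one]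
      have ho : o = v * a := (hinj this).symm
      rw [Submodule.Quotient.mk_eq_zero, ho]
      exact Submodule.mem_span_singleton.2 ⟨v, by rw [smul_eq_mul]⟩
    · intro f
      obtain ⟨t, ht⟩ := Submodule.Quotient.mk_surjective _ (f (Submodule.Quotient.mk (1 : O)))
      have hfa : a • f (Submodule.Quotient.mk (1 : O)) = 0 := by
        rw [← map_smul, ← Submodule.Quotient.mk_smul, smul_eq_mul, mul_one]
        have : Submodule.Quotient.mk (p := Submodule.span O {a}) a = 0 := by
          rw [Submodule.Quotient.mk_eq_zero]
          exact Submodule.mem_span_singleton_self a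
        rw [this, map_zero]
      rw [← ht, ← Submodule.Quotient.mk_smul] at hfa
      rw [Submodule.Quotient.mk_eq_zero] at hfa
      obtain ⟨c, hc⟩ := hfa
      rw [Algebra.linearMap_apply, Algebra.smul_def] at hc
      have htc : t = algebraMap O E c * (algebraMap O E a)⁻¹ := by
        field_simp
        rw [mul_comm] at hc
        rw [← hc]
      refine ⟨Submodule.Quotient.mk c, ?_⟩
      apply LinearMap.ext; intro z
      obtain ⟨u, rfl⟩ := Submodule.Quotient.mk_surjective _ z
      rw [hΦapp]
      have hz : Submodule.Quotient.mk (p := Submodule.span O {a}) u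
          = u • Submodule.Quotient.mk (1 : O) := by
        rw [← Submodule.Quotient.mk_smul, smul_eq_mul, mul_one]
      rw [hz, map_smul, ← ht, ← Submodule.Quotient.mk_smul]
      congr 1
      rw [Algebra.smul_def, htc, map_mul]
      ring
  exact ⟨(LinearEquiv.ofBijective Φ hbij).symm⟩

lemma exists_dual_equiv [IsPrincipalIdealRing O] (N : Type*) [AddCommGroup N] [Module O N]
    [Module.Finite O N] (hN : Module.IsTorsion O N) :
    Nonempty ((N →ₗ[O] (E ⧸ LinearMap.range (Algebra.linearMap O E))) ≃ₗ[O] N) := by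
  classical
  set Q := E ⧸ LinearMap.range (Algebra.linearMap O E) with hQ
  have hNU : Module.IsTorsion O (ULift.{u} N) := by
    intro x
    obtain ⟨c, hc⟩ := @hN x.down
    exact ⟨c, by
      apply ULift.ext
      exact hc⟩
  obtain ⟨ι, hfin, p, hp, ex, ⟨d⟩⟩ := Module.equiv_directSum_of_isTorsion hNU
  haveI := hfin
  have eq1 : (N →ₗ[O] Q) ≃ₗ[O] (ULift.{u} N →ₗ[O] Q) :=
    LinearEquiv.congrLeft Q O ULift.moduleEquiv.symm
  have eq2 : (ULift.{u} N →ₗ[O] Q) ≃ₗ[O] ((⨁ i : ι, O ⧸ Submodule.span O {p i ^ ex i}) →ₗ[O] Q) :=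
    LinearEquiv.congrLeft Q O d
  have eq3 : ((⨁ i : ι, O ⧸ Submodule.span O {p i ^ ex i}) →ₗ[O] Q) ≃ₗ[O]
      ((i : ι) → ((O ⧸ Submodule.span O {p i ^ ex i}) →ₗ[O] Q)) := (DFinsupp.lsum O).symm
  have eq4 : ((i : ι) → ((O ⧸ Submodule.span O {p i ^ ex i}) →ₗ[O] Q)) ≃ₗ[O]
      ((i : ι) → O ⧸ Submodule.span O {p i ^ ex i}) :=
    LinearEquiv.piCongrRight
      (fun i => Classical.choice (homQuot_equiv (p i ^ ex i) (pow_ne_zero _ (hp i).ne_zero)))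
  have eq5 : ((i : ι) → O ⧸ Submodule.span O {p i ^ ex i}) ≃ₗ[O] (⨁ i : ι, O ⧸ Submodule.span O {p i ^ ex i}) :=
    (DirectSum.linearEquivFunOnFintype O ι _).symm
  exact ⟨eq1 ≪≫ₗ eq2 ≪≫ₗ eq3 ≪≫ₗ eq4 ≪≫ₗ eq5 ≪≫ₗ d.symm ≪≫ₗ ULift.moduleEquiv⟩

end Dual


section Pairing

variable {O : Type*} [CommRing O] [IsDomain O]
    {E : Type*} [Field E] [Algebra O E] [IsFractionRing O E]
    {M₁ : Type*} [AddCommGroup M₁] [Module O M₁]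
    {ME₁ : Type*} [AddCommGroup ME₁] [Module O ME₁] [Module E ME₁] [IsScalarTower O E ME₁]
    {M₂ : Type*} [AddCommGroup M₂] [Module O M₂]
    {ME₂ : Type*} [AddCommGroup ME₂] [Module O ME₂] [Module E ME₂] [IsScalarTower O E ME₂]
    (iota₁ : M₁ →ₗ[O] ME₁) (iota₂ : M₂ →ₗ[O] ME₂)
    (B : M₁ →ₗ[O] M₂ →ₗ[O] O)
    (BE : ME₁ →ₗ[E] ME₂ →ₗ[E] E)

lemma BE_smul_left (a : O) (x : ME₁) (y : ME₂) :
    BE (a • x) y = algebraMap O E a * BE x y := by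
  rw [← algebraMap_smul E a x, map_smul, LinearMap.smul_apply, smul_eq_mul]

lemma BE_smul_right (a : O) (x : ME₁) (y : ME₂) :
    BE x (a • y) = algebraMap O E a * BE x y := by
  rw [← algebraMap_smul E a y, map_smul, smul_eq_mul]

variable (hBE : ∀ (m : M₁) (m' : M₂), BE (iota₁ m) (iota₂ m') = algebraMap O E (B m m'))

include hBE in
/-- If `x ∈ M_{1,E}` pairs into `O` against every element of `iota₂ M₂`, then
`x ∈ iota₁ M₁`. -/
lemma dual_aux [IsLocalizedModule (nonZeroDivisors O) iota₁]
    (hBinj : Function.Injective B) (hBsurj : Function.Surjective B)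
    (x : ME₁) (hx : ∀ m', BE x (iota₂ m') ∈ LinearMap.range (Algebra.linearMap O E)) :
    ∃ m, x = iota₁ m := by
  obtain ⟨⟨m, s⟩, hm⟩ := IsLocalizedModule.surj (nonZeroDivisors O) iota₁ x
  have hm : (s : O) • x = iota₁ m := hm
  have hs0 : algebraMap O E (s : O) ≠ 0 :=
    IsFractionRing.to_map_ne_zero_of_mem_nonZeroDivisors s.2
  have hinj := IsFractionRing.injective O E
  choose c hc using hx
  have hkey : ∀ m', B m m' = (s : O) * c m' := by
    intro m'
    apply hinj
    rw [map_mul, ← hBE m m', ← hm, BE_smul_left]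
    congr 1
    rw [← hc m', Algebra.linearMap_apply]
  have hcadd : ∀ u v, c (u + v) = c u + c v := by
    intro u v
    apply hinj
    rw [map_add]
    have h3 := hc (u + v); have h1 := hc u; have h2 := hc v
    rw [Algebra.linearMap_apply] at h1 h2 h3
    rw [h3, h1, h2, map_add, map_add]
  have hcsmul : ∀ (a : O) u, c (a • u) = a * c u := by
    intro a u
    apply hinj
    have h3 := hc (a • u); have h1 := hc u
    rw [Algebra.linearMap_apply] at h1 h3
    rw [map_mul, h3, h1, map_smul, BE_smul_right]
  let Φ : M₂ →ₗ[O] O :=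
    { toFun := c
      map_add' := hcadd
      map_smul' := fun a u => by
        simp only [RingHom.id_apply, smul_eq_mul]
        exact hcsmul a u }
  obtain ⟨m₀, hm₀⟩ := hBsurj Φ
  have hmm : m = (s : O) • m₀ := by
    apply hBinj
    apply LinearMap.ext; intro m'
    rw [map_smul, LinearMap.smul_apply, smul_eq_mul, hm₀]
    exact hkey m'
  refine ⟨m₀, ?_⟩
  have h2 : algebraMap O E (s : O) • x = algebraMap O E (s : O) • iota₁ m₀ := by
    rw [algebraMap_smul, algebraMap_smul, hm, hmm, map_smul]
  calc x = (algebraMap O E (s : O))⁻¹ • (algebraMap O E (s : O) • x) :=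
        (inv_smul_smul₀ hs0 x).symm
    _ = (algebraMap O E (s : O))⁻¹ • (algebraMap O E (s : O) • iota₁ m₀) := by rw [h2]
    _ = iota₁ m₀ := inv_smul_smul₀ hs0 _

include hBE in
/-- Any `O`-linear functional `M₂ → E` is given by pairing against some element of `M_{1,E}`. -/
lemma realize_aux [Module.Finite O M₂] [Module.Free O M₂]
    (hBsurj : Function.Surjective B) (f : M₂ →ₗ[O] E) :
    ∃ z : ME₁, ∀ m', BE z (iota₂ m') = f m' := by
  classical
  let bM := Module.Free.chooseBasis O M₂
  obtain ⟨s, hs⟩ := IsLocalization.exist_integer_multiples_of_finite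
    (nonZeroDivisors O) (fun i => f (bM i))
  choose o ho using hs
  let g : M₂ →ₗ[O] O := (Module.Basis.constr bM O) o
  obtain ⟨m₀, hm₀⟩ := hBsurj g
  have hs0 : algebraMap O E (s : O) ≠ 0 :=
    IsFractionRing.to_map_ne_zero_of_mem_nonZeroDivisors s.2
  refine ⟨(algebraMap O E (s : O))⁻¹ • iota₁ m₀, fun m' => ?_⟩
  have h2 : (Algebra.linearMap O E).comp g = algebraMap O E (s : O) • f := by
    apply Module.Basis.ext bM; intro i
    rw [LinearMap.comp_apply, Algebra.linearMap_apply, LinearMap.smul_apply]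
    have : g (bM i) = o i := Module.Basis.constr_basis bM O o i
    rw [this, ho i, Algebra.smul_def, smul_eq_mul]
  have h3 : algebraMap O E (g m') = algebraMap O E (s : O) * f m' := by
    have := LinearMap.congr_fun h2 m'
    rw [LinearMap.comp_apply, Algebra.linearMap_apply, LinearMap.smul_apply, smul_eq_mul] at this
    exact this
  rw [map_smul, LinearMap.smul_apply, smul_eq_mul, hBE, hm₀, h3]
  rw [inv_mul_cancel_left₀ hs0]

end Pairing

section MainAux

variable {O : Type*} [CommRing O] [IsDomain O] [IsPrincipalIdealRing O]
    {E : Type*} [Field E] [Algebra O E] [IsFractionRing O E]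
    {TE : Type*} [CommRing TE] [Algebra O TE]
    {TE' : Type*} [CommRing TE'] [Algebra O TE']
    {M₁ : Type*} [AddCommGroup M₁] [Module O M₁] [Module.Finite O M₁] [Module.Free O M₁]
    {ME₁ : Type*} [AddCommGroup ME₁] [Module O ME₁] [Module E ME₁] [Module TE ME₁]
    [IsScalarTower O TE ME₁] [IsScalarTower O E ME₁] [SMulCommClass E TE ME₁]
    {M₂ : Type*} [AddCommGroup M₂] [Module O M₂] [Module.Finite O M₂] [Module.Free O M₂]
    {ME₂ : Type*} [AddCommGroup ME₂] [Module O ME₂] [Module E ME₂] [Module TE' ME₂]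
    [IsScalarTower O TE' ME₂] [IsScalarTower O E ME₂] [SMulCommClass E TE' ME₂]

set_option maxHeartbeats 2000000 in
theorem aux_pairing
    (e : TE) (hee : e * e = e) (e' : TE') (hee' : e' * e' = e')
    (iota₁ : M₁ →ₗ[O] ME₁) [IsLocalizedModule (nonZeroDivisors O) iota₁]
    (iota₂ : M₂ →ₗ[O] ME₂) [IsLocalizedModule (nonZeroDivisors O) iota₂]
    (B : M₁ →ₗ[O] M₂ →ₗ[O] O)
    (hB : Function.Bijective B) (hBf : Function.Bijective B.flip)
    (BE : ME₁ →ₗ[E] ME₂ →ₗ[E] E)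
    (hBE : ∀ (m : M₁) (m' : M₂), BE (iota₁ m) (iota₂ m') = algebraMap O E (B m m'))
    (horth₁ : ∀ (m : M₁) (m' : M₂), BE (e • iota₁ m) ((1 - e') • iota₂ m') = 0)
    (horth₂ : ∀ (m : M₁) (m' : M₂), BE ((1 - e) • iota₁ m) (e' • iota₂ m') = 0) :
    ∃ Bbar : (C0M e iota₁) →ₗ[O] (C0M e' iota₂) →ₗ[O]
        (E ⧸ LinearMap.range (Algebra.linearMap O E)),
      (∀ (m : M₁) (m' : M₂), Bbar (clsM e iota₁ m) (clsM e' iota₂ m') =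
        Submodule.Quotient.mk (BE (e • iota₁ m) (e' • iota₂ m'))) ∧
      Function.Bijective Bbar := by
  classical
  have hinj := IsFractionRing.injective O E
  have hsne : ∀ s : nonZeroDivisors O, algebraMap O E (s : O) ≠ 0 := fun s =>
    IsFractionRing.to_map_ne_zero_of_mem_nonZeroDivisors s.2
  have hBEflip : ∀ (m' : M₂) (m : M₁),
      BE.flip (iota₂ m') (iota₁ m) = algebraMap O E (B.flip m' m) := by
    intro m' m
    simp only [LinearMap.flip_apply]
    exact hBE m m'
  -- extended orthogonality
  have O1 : ∀ (x : ME₁) (y : ME₂), BE (e • x) y = BE (e • x) (e' • y) := by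
    intro x y
    obtain ⟨⟨m, s⟩, hm⟩ := IsLocalizedModule.surj (nonZeroDivisors O) iota₁ x
    obtain ⟨⟨m', s'⟩, hm'⟩ := IsLocalizedModule.surj (nonZeroDivisors O) iota₂ y
    have hm : (s : O) • x = iota₁ m := hm
    have hm' : (s' : O) • y = iota₂ m' := hm'
    have h1 : (s : O) • (e • x) = e • iota₁ m := by rw [smul_comm, hm]
    have h3 : (s' : O) • (e' • y) = e' • iota₂ m' := by rw [smul_comm, hm']
    have key := horth₁ m m'
    rw [sub_smul, one_smul, map_sub, sub_eq_zero] at key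
    have l1 : algebraMap O E (s' : O) * (algebraMap O E (s : O) * BE (e • x) y)
        = BE (e • iota₁ m) (iota₂ m') := by
      rw [← h1, ← hm', BE_smul_left BE (s : O), BE_smul_right BE (s' : O)]; ring
    have l2 : algebraMap O E (s' : O) * (algebraMap O E (s : O) * BE (e • x) (e' • y))
        = BE (e • iota₁ m) (e' • iota₂ m') := by
      rw [← h1, ← h3, BE_smul_left BE (s : O), BE_smul_right BE (s' : O)]; ring
    apply mul_left_cancel₀ (hsne s)
    apply mul_left_cancel₀ (hsne s')
    rw [l1, l2]; exact key
  have O2 : ∀ (x : ME₁) (y : ME₂), BE x (e' • y) = BE (e • x) (e' • y) := by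
    intro x y
    obtain ⟨⟨m, s⟩, hm⟩ := IsLocalizedModule.surj (nonZeroDivisors O) iota₁ x
    obtain ⟨⟨m', s'⟩, hm'⟩ := IsLocalizedModule.surj (nonZeroDivisors O) iota₂ y
    have hm : (s : O) • x = iota₁ m := hm
    have hm' : (s' : O) • y = iota₂ m' := hm'
    have h1 : (s : O) • (e • x) = e • iota₁ m := by rw [smul_comm, hm]
    have h3 : (s' : O) • (e' • y) = e' • iota₂ m' := by rw [smul_comm, hm']
    have key := horth₂ m m'
    rw [sub_smul, one_smul, map_sub, LinearMap.sub_apply, sub_eq_zero] at key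
    have l1 : algebraMap O E (s' : O) * (algebraMap O E (s : O) * BE x (e' • y))
        = BE (iota₁ m) (e' • iota₂ m') := by
      rw [← hm, ← h3, BE_smul_left BE (s : O), BE_smul_right BE (s' : O)]; ring
    have l2 : algebraMap O E (s' : O) * (algebraMap O E (s : O) * BE (e • x) (e' • y))
        = BE (e • iota₁ m) (e' • iota₂ m') := by
      rw [← h1, ← h3, BE_smul_left BE (s : O), BE_smul_right BE (s' : O)]; ring
    apply mul_left_cancel₀ (hsne s)
    apply mul_left_cancel₀ (hsne s')
    rw [l1, l2]; exact key
  -- invariance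
  have einv₁ : ∀ x : ME₁, x ∈ eMsub e iota₁ → e • x = x := by
    intro x hx
    obtain ⟨m, rfl⟩ := (mem_eMsub e iota₁).1 hx
    rw [smul_smul, hee]
  have einv₂ : ∀ y : ME₂, y ∈ eMsub e' iota₂ → e' • y = y := by
    intro y hy
    obtain ⟨m', rfl⟩ := (mem_eMsub e' iota₂).1 hy
    rw [smul_smul, hee']
  -- duality characterizations
  have K1 : ∀ x : ME₁, e • x = x →
      (∀ m', BE x (e' • iota₂ m') ∈ LinearMap.range (Algebra.linearMap O E)) →
      ∃ m₀, x = iota₁ m₀ := by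
    intro x hx h
    apply dual_aux iota₁ iota₂ B BE hBE hB.1 hB.2 x
    intro m'
    have heq : BE x (iota₂ m') = BE x (e' • iota₂ m') := by
      calc BE x (iota₂ m') = BE (e • x) (iota₂ m') := by rw [hx]
        _ = BE (e • x) (e' • iota₂ m') := O1 x (iota₂ m')
        _ = BE x (e' • iota₂ m') := by rw [hx]
    rw [heq]; exact h m'
  have K2 : ∀ y : ME₂, e' • y = y →
      (∀ m, BE (e • iota₁ m) y ∈ LinearMap.range (Algebra.linearMap O E)) →
      ∃ m₀', y = iota₂ m₀' := by
    intro y hy h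
    apply dual_aux iota₂ iota₁ B.flip BE.flip hBEflip hBf.1 hBf.2 y
    intro m
    rw [LinearMap.flip_apply]
    have heq : BE (iota₁ m) y = BE (e • iota₁ m) y := by
      calc BE (iota₁ m) y = BE (iota₁ m) (e' • y) := by rw [hy]
        _ = BE (e • iota₁ m) (e' • y) := O2 (iota₁ m) y
        _ = BE (e • iota₁ m) y := by rw [hy]
    rw [heq]; exact h m
  -- integrality of the pairing on the intersection
  have memO : ∀ x : ME₁, x ∈ eMsub e iota₁ → ∀ y : ME₂, y ∈ eMsub e' iota₂ →
      ((∃ m₀, x = iota₁ m₀) ∨ (∃ m₀', y = iota₂ m₀')) →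
      BE x y ∈ LinearMap.range (Algebra.linearMap O E) := by
    intro x hx y hy h
    obtain ⟨m, hxm⟩ := (mem_eMsub e iota₁).1 hx
    obtain ⟨m', hym⟩ := (mem_eMsub e' iota₂).1 hy
    have hex : e • x = x := einv₁ x hx
    have hey : e' • y = y := einv₂ y hy
    rcases h with ⟨m₀, hxi⟩ | ⟨m₀', hyi⟩
    · refine ⟨B m₀ m', ?_⟩
      rw [Algebra.linearMap_apply, ← hBE]
      calc BE (iota₁ m₀) (iota₂ m')
          = BE (e • iota₁ m₀) (iota₂ m') := by rw [← hxi, hex, hxi]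
        _ = BE (e • iota₁ m₀) (e' • iota₂ m') := O1 (iota₁ m₀) (iota₂ m')
        _ = BE (iota₁ m₀) (e' • iota₂ m') := by rw [← hxi, hex, hxi]
        _ = BE x y := by rw [← hxi, ← hym]
    · refine ⟨B m m₀', ?_⟩
      rw [Algebra.linearMap_apply, ← hBE]
      calc BE (iota₁ m) (iota₂ m₀')
          = BE (iota₁ m) (e' • iota₂ m₀') := by rw [← hyi, hey, hyi]
        _ = BE (e • iota₁ m) (e' • iota₂ m₀') := O2 (iota₁ m) (iota₂ m₀')
        _ = BE (e • iota₁ m) (iota₂ m₀') := by rw [← hyi, hey, hyi]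
        _ = BE x y := by rw [← hxm, ← hyi]
  -- the quotient pairing
  let pairQ : ME₁ →ₗ[O] ME₂ →ₗ[O] (E ⧸ LinearMap.range (Algebra.linearMap O E)) :=
    LinearMap.mk₂ O
      (fun x y => Submodule.Quotient.mk (BE x y))
      (fun x₁ x₂ y => by
        rw [map_add, LinearMap.add_apply, Submodule.Quotient.mk_add])
      (fun a x y => by
        rw [BE_smul_left BE a, ← Algebra.smul_def, Submodule.Quotient.mk_smul])
      (fun x y₁ y₂ => by rw [map_add, Submodule.Quotient.mk_add])
      (fun a x y => by
        rw [BE_smul_right BE a, ← Algebra.smul_def, Submodule.Quotient.mk_smul])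
  let P₁ := eMsub e iota₁
  let P₂ := eMsub e' iota₂
  let pair0 : ↥P₁ →ₗ[O] ↥P₂ →ₗ[O] (E ⧸ LinearMap.range (Algebra.linearMap O E)) :=
    pairQ.compl₁₂ P₁.subtype P₂.subtype
  have pair0_apply : ∀ (x : ↥P₁) (y : ↥P₂),
      pair0 x y = Submodule.Quotient.mk (BE ↑x ↑y) := fun x y => rfl
  let K₁ := Submodule.comap P₁.subtype (P₁ ⊓ LinearMap.range iota₁)
  let K₂ := Submodule.comap P₂.subtype (P₂ ⊓ LinearMap.range iota₂)
  have hker₂ : ∀ (x : ↥P₁) (y : ↥P₂), y ∈ K₂ → pair0 x y = 0 := by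
    intro x y hy
    rw [pair0_apply, Submodule.Quotient.mk_eq_zero]
    obtain ⟨hyP, m₀', hm₀'⟩ := hy
    exact memO ↑x x.2 ↑y y.2 (Or.inr ⟨m₀', hm₀'.symm⟩)
  have hker₁ : ∀ (x : ↥P₁), x ∈ K₁ → ∀ (y : ↥P₂), pair0 x y = 0 := by
    intro x hx y
    rw [pair0_apply, Submodule.Quotient.mk_eq_zero]
    obtain ⟨hxP, m₀, hm₀⟩ := hx
    exact memO ↑x x.2 ↑y y.2 (Or.inl ⟨m₀, hm₀.symm⟩)
  let g : ↥P₁ →ₗ[O] (C0M e' iota₂ →ₗ[O] (E ⧸ LinearMap.range (Algebra.linearMap O E))) :=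
    { toFun := fun x => Submodule.liftQ K₂ (pair0 x) (fun y hy => hker₂ x y hy)
      map_add' := fun x₁ x₂ => by
        apply LinearMap.ext; intro z
        obtain ⟨y, rfl⟩ := Submodule.Quotient.mk_surjective _ z
        simp only [Submodule.liftQ_apply, map_add, LinearMap.add_apply]; rfl
      map_smul' := fun a x => by
        apply LinearMap.ext; intro z
        obtain ⟨y, rfl⟩ := Submodule.Quotient.mk_surjective _ z
        simp only [Submodule.liftQ_apply, map_smul, RingHom.id_apply, LinearMap.smul_apply]; rfl }
  have gapp : ∀ (x : ↥P₁) (y : ↥P₂), g x (Submodule.Quotient.mk y)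
      = Submodule.Quotient.mk (BE ↑x ↑y) := by
    intro x y
    show Submodule.liftQ K₂ (pair0 x) _ (Submodule.Quotient.mk y) = _
    exact pair0_apply x y
  let Bbar : C0M e iota₁ →ₗ[O] C0M e' iota₂ →ₗ[O]
      (E ⧸ LinearMap.range (Algebra.linearMap O E)) :=
    Submodule.liftQ K₁ g (by
      intro x hx
      rw [LinearMap.mem_ker]
      apply LinearMap.ext; intro z
      obtain ⟨y, rfl⟩ := Submodule.Quotient.mk_surjective _ z
      rw [gapp x y, LinearMap.zero_apply, ← pair0_apply, hker₁ x hx y])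
  have Bbar_apply : ∀ (x : ↥P₁) (y : ↥P₂),
      Bbar (Submodule.Quotient.mk x) (Submodule.Quotient.mk y)
        = Submodule.Quotient.mk (BE ↑x ↑y) := by
    intro x y
    show Submodule.liftQ K₁ g _ (Submodule.Quotient.mk x) (Submodule.Quotient.mk y) = _
    rw [Submodule.liftQ_apply]
    exact gapp x y
  refine ⟨Bbar, ?_, ?_⟩
  · intro m m'
    exact Bbar_apply ⟨e • iota₁ m, Submodule.subset_span ⟨m, rfl⟩⟩
      ⟨e' • iota₂ m', Submodule.subset_span ⟨m', rfl⟩⟩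
  constructor
  · -- injectivity
    rw [← LinearMap.ker_eq_bot, Submodule.eq_bot_iff]
    intro z hz
    rw [LinearMap.mem_ker] at hz
    obtain ⟨x, rfl⟩ := Submodule.Quotient.mk_surjective _ z
    rw [Submodule.Quotient.mk_eq_zero]
    have hcond : ∀ m', BE (↑x) (e' • iota₂ m') ∈ LinearMap.range (Algebra.linearMap O E) := by
      intro m'
      have h1 : Bbar (Submodule.Quotient.mk x)
          (Submodule.Quotient.mk (⟨e' • iota₂ m', Submodule.subset_span ⟨m', rfl⟩⟩ : ↥P₂)) = 0 := by
        rw [hz, LinearMap.zero_apply]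
      rw [Bbar_apply, Submodule.Quotient.mk_eq_zero] at h1
      exact h1
    obtain ⟨m₀, hm₀⟩ := K1 ↑x (einv₁ ↑x x.2) hcond
    exact ⟨x.2, ⟨m₀, hm₀.symm⟩⟩
  · -- surjectivity
    intro φ
    -- the submodules P₁, P₂ are finite free over O
    haveI hfin2 : Module.Finite O ↥P₂ :=
      Module.Finite.of_surjective (jsub e' iota₂) (jsub_surjective e' iota₂)
    haveI hfin1 : Module.Finite O ↥P₁ :=
      Module.Finite.of_surjective (jsub e iota₁) (jsub_surjective e iota₁)
    haveI hnz2 : NoZeroSMulDivisors O ↥P₂ := by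
      refine ⟨fun {c y} h => ?_⟩
      by_cases hc : c = 0
      · exact Or.inl hc
      · right
        have h' : c • (y : ME₂) = 0 := by
          rw [← Submodule.coe_smul, h, Submodule.coe_zero]
        have hEc : algebraMap O E c ≠ 0 := fun hh => hc (hinj (by rw [hh, map_zero]))
        have h'' : algebraMap O E c • (y : ME₂) = 0 := by rw [algebraMap_smul]; exact h'
        have hy0 : (y : ME₂) = 0 := by
          calc (y : ME₂) = (algebraMap O E c)⁻¹ • (algebraMap O E c • (y : ME₂)) :=
              (inv_smul_smul₀ hEc _).symm
            _ = 0 := by rw [h'', smul_zero]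
        exact Subtype.ext hy0
    haveI hnz1 : NoZeroSMulDivisors O ↥P₁ := by
      refine ⟨fun {c y} h => ?_⟩
      by_cases hc : c = 0
      · exact Or.inl hc
      · right
        have h' : c • (y : ME₁) = 0 := by
          rw [← Submodule.coe_smul, h, Submodule.coe_zero]
        have hEc : algebraMap O E c ≠ 0 := fun hh => hc (hinj (by rw [hh, map_zero]))
        have h'' : algebraMap O E c • (y : ME₁) = 0 := by rw [algebraMap_smul]; exact h'
        have hy0 : (y : ME₁) = 0 := by
          calc (y : ME₁) = (algebraMap O E c)⁻¹ • (algebraMap O E c • (y : ME₁)) :=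
              (inv_smul_smul₀ hEc _).symm
            _ = 0 := by rw [h'', smul_zero]
        exact Subtype.ext hy0
    haveI : Module.Free O ↥P₂ := Module.free_of_finite_type_torsion_free'
    haveI : Module.Free O ↥P₁ := Module.free_of_finite_type_torsion_free'
    let b := Module.Free.chooseBasis O ↥P₂
    choose cE hcE using fun i =>
      Submodule.Quotient.mk_surjective (LinearMap.range (Algebra.linearMap O E))
        (φ (Submodule.Quotient.mk (b i)))
    let fE : ↥P₂ →ₗ[O] E := (Module.Basis.constr b O) cE
    have hfE : ∀ y : ↥P₂,
        Submodule.Quotient.mk (fE y) = φ (Submodule.Quotient.mk y) := by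
      have hcomp : (LinearMap.range (Algebra.linearMap O E)).mkQ ∘ₗ fE = φ ∘ₗ K₂.mkQ := by
        apply Module.Basis.ext b; intro i
        rw [LinearMap.comp_apply, LinearMap.comp_apply, Submodule.mkQ_apply, Submodule.mkQ_apply]
        rw [show fE (b i) = cE i from Module.Basis.constr_basis b O cE i]
        exact hcE i
      intro y
      have hcy := LinearMap.congr_fun hcomp y
      rw [LinearMap.comp_apply, LinearMap.comp_apply, Submodule.mkQ_apply, Submodule.mkQ_apply]
        at hcy
      exact hcy
    let f : M₂ →ₗ[O] E := fE ∘ₗ jsub e' iota₂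
    obtain ⟨z, hz⟩ := realize_aux iota₁ iota₂ B BE hBE hB.2 f
    set x := e • z with hxdef
    have hex : e • x = x := by rw [hxdef, smul_smul, hee]
    have hxy : ∀ y : ↥P₂, BE x ↑y = fE y := by
      intro y
      obtain ⟨m', hym⟩ := (mem_eMsub e' iota₂).1 y.2
      obtain ⟨⟨m'', s⟩, hs⟩ := IsLocalizedModule.surj (nonZeroDivisors O) iota₂ (e' • iota₂ m')
      have hs : (s : O) • (e' • iota₂ m') = iota₂ m'' := hs
      have h1 : BE x (e' • iota₂ m') = BE z (e' • iota₂ m') := by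
        rw [hxdef]; exact (O2 z (iota₂ m')).symm
      have h2 : algebraMap O E (s : O) * BE z (e' • iota₂ m') = BE z (iota₂ m'') := by
        rw [← hs, BE_smul_right BE (s : O)]
      have h3 : BE z (iota₂ m'') = fE (jsub e' iota₂ m'') := hz m''
      have h4 : jsub e' iota₂ m'' = (s : O) • y := by
        apply Subtype.ext
        show e' • iota₂ m'' = (s : O) • (y : ME₂)
        rw [← hs, hym, smul_comm e' ((s : O)) (e' • iota₂ m'), smul_smul, hee']
      have h5 : algebraMap O E (s : O) * BE x ↑y = algebraMap O E (s : O) * fE y := by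
        calc algebraMap O E (s : O) * BE x ↑y
            = algebraMap O E (s : O) * BE x (e' • iota₂ m') := by rw [hym]
          _ = algebraMap O E (s : O) * BE z (e' • iota₂ m') := by rw [h1]
          _ = BE z (iota₂ m'') := h2
          _ = fE (jsub e' iota₂ m'') := h3
          _ = fE ((s : O) • y) := by rw [h4]
          _ = algebraMap O E (s : O) * fE y := by
              rw [map_smul, Algebra.smul_def]
      exact mul_left_cancel₀ (hsne s) h5
    have hxO : ∀ y : ↥P₂, (↑y : ME₂) ∈ LinearMap.range iota₂ →
        BE x ↑y ∈ LinearMap.range (Algebra.linearMap O E) := by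
      intro y hyL
      rw [hxy y]
      have hy0 : Submodule.Quotient.mk (p := K₂) y = 0 := by
        rw [Submodule.Quotient.mk_eq_zero]
        exact ⟨y.2, hyL⟩
      have h6 := hfE y
      rw [hy0, map_zero] at h6
      exact (Submodule.Quotient.mk_eq_zero _).1 h6
    -- dual basis vectors
    let a := Module.Free.chooseBasis O ↥P₁
    have hyi : ∀ i, ∃ w : ME₂, (e' • w = w) ∧
        ∀ p : ↥P₁, BE ↑p w = algebraMap O E (a.coord i p) := by
      intro i
      obtain ⟨w₀, hw₀⟩ := realize_aux iota₂ iota₁ B.flip BE.flip hBEflip hBf.2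
        ((Algebra.linearMap O E) ∘ₗ (a.coord i) ∘ₗ (jsub e iota₁))
      refine ⟨e' • w₀, by rw [smul_smul, hee'], ?_⟩
      intro p
      obtain ⟨m, hpm⟩ := (mem_eMsub e iota₁).1 p.2
      obtain ⟨⟨mt, s⟩, hs⟩ := IsLocalizedModule.surj (nonZeroDivisors O) iota₁ (e • iota₁ m)
      have hs : (s : O) • (e • iota₁ m) = iota₁ mt := hs
      have h1 : BE ↑p (e' • w₀) = BE (e • iota₁ m) w₀ := by
        rw [hpm]
        exact (O1 (iota₁ m) w₀).symm
      have h2 : algebraMap O E (s : O) * BE (e • iota₁ m) w₀ = BE (iota₁ mt) w₀ := by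
        rw [← hs, BE_smul_left BE (s : O)]
      have h3 : BE (iota₁ mt) w₀ = algebraMap O E (a.coord i (jsub e iota₁ mt)) := by
        have := hw₀ mt
        rw [LinearMap.flip_apply] at this
        rw [this, LinearMap.comp_apply, LinearMap.comp_apply, Algebra.linearMap_apply]
      have h4 : jsub e iota₁ mt = (s : O) • p := by
        apply Subtype.ext
        show e • iota₁ mt = (s : O) • (p : ME₁)
        rw [← hs, hpm, smul_comm e ((s : O)) (e • iota₁ m), smul_smul, hee]
      have h5 : algebraMap O E (s : O) * BE ↑p (e' • w₀)
          = algebraMap O E (s : O) * algebraMap O E (a.coord i p) := by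
        calc algebraMap O E (s : O) * BE ↑p (e' • w₀)
            = algebraMap O E (s : O) * BE (e • iota₁ m) w₀ := by rw [h1]
          _ = BE (iota₁ mt) w₀ := h2
          _ = algebraMap O E (a.coord i (jsub e iota₁ mt)) := h3
          _ = algebraMap O E (a.coord i ((s : O) • p)) := by rw [h4]
          _ = algebraMap O E (s : O) * algebraMap O E (a.coord i p) := by
              rw [map_smul, smul_eq_mul, map_mul]
      exact mul_left_cancel₀ (hsne s) h5
    choose y hy_e hy_val using hyi
    have hyP : ∀ i, ((y i) ∈ P₂) ∧ ((y i) ∈ LinearMap.range iota₂) := by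
      intro i
      have hL : ∃ m₀', y i = iota₂ m₀' := by
        apply K2 (y i) (hy_e i)
        intro m
        refine ⟨a.coord i (jsub e iota₁ m), ?_⟩
        rw [Algebra.linearMap_apply]
        exact (hy_val i (jsub e iota₁ m)).symm
      obtain ⟨m₀', hm₀'⟩ := hL
      refine ⟨?_, ⟨m₀', hm₀'.symm⟩⟩
      rw [mem_eMsub e' iota₂]
      exact ⟨m₀', by rw [← hm₀']; exact (hy_e i).symm⟩
    -- expand x in the basis a with E-coefficients
    obtain ⟨⟨mz, sz⟩, hsz⟩ := IsLocalizedModule.surj (nonZeroDivisors O) iota₁ z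
    have hsz : (sz : O) • z = iota₁ mz := hsz
    have hxrep : x = (algebraMap O E (sz : O))⁻¹ • ((jsub e iota₁ mz : ↥P₁) : ME₁) := by
      rw [hxdef]
      rw [show ((jsub e iota₁ mz : ↥P₁) : ME₁) = e • iota₁ mz from rfl, ← hsz]
      rw [smul_comm e ((sz : O)) z, ← algebraMap_smul E (sz : O) (e • z),
        inv_smul_smul₀ (hsne sz)]
    have hrepr : ((jsub e iota₁ mz : ↥P₁) : ME₁)
        = ∑ i, (a.repr (jsub e iota₁ mz) i) • ((a i : ↥P₁) : ME₁) := by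
      have h7 : jsub e iota₁ mz = ∑ i, a.repr (jsub e iota₁ mz) i • a i :=
        (a.sum_repr _).symm
      have h8 := congrArg (P₁.subtype) h7
      rw [map_sum] at h8
      simpa [Submodule.subtype_apply] using h8
    have hxsum : x = ∑ i, ((algebraMap O E (sz : O))⁻¹
        * algebraMap O E (a.repr (jsub e iota₁ mz) i)) • ((a i : ↥P₁) : ME₁) := by
      rw [hxrep, hrepr, Finset.smul_sum]
      apply Finset.sum_congr rfl
      intro i _
      rw [← algebraMap_smul E (a.repr (jsub e iota₁ mz) i) ((a i : ↥P₁) : ME₁), smul_smul]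
    have hcoeff : ∀ j, BE x (y j) = (algebraMap O E (sz : O))⁻¹
        * algebraMap O E (a.repr (jsub e iota₁ mz) j) := by
      intro j
      conv_lhs => rw [hxsum]
      rw [map_sum, LinearMap.sum_apply]
      have hterm : ∀ i, BE (((algebraMap O E (sz : O))⁻¹
          * algebraMap O E (a.repr (jsub e iota₁ mz) i)) • ((a i : ↥P₁) : ME₁)) (y j)
          = ((algebraMap O E (sz : O))⁻¹ * algebraMap O E (a.repr (jsub e iota₁ mz) i))
            * algebraMap O E (a.coord j (a i)) := by
        intro i
        rw [map_smul, LinearMap.smul_apply, smul_eq_mul, hy_val j (a i)]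
      rw [Finset.sum_congr rfl (fun i _ => hterm i)]
      have hδ : ∀ i, (a.coord j) (a i) = if i = j then 1 else 0 := by
        intro i
        rw [Module.Basis.coord_apply, Module.Basis.repr_self]
        exact Finsupp.single_apply
      rw [Finset.sum_congr rfl (fun i _ => by rw [hδ i])]
      simp [Finset.sum_ite_eq']
    have hxP : x ∈ P₁ := by
      have hmem : ∀ j, BE x (y j) ∈ LinearMap.range (Algebra.linearMap O E) := by
        intro j
        exact hxO ⟨y j, (hyP j).1⟩ (hyP j).2
      choose t ht using fun j => LinearMap.mem_range.1 (hmem j)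
      have hxt : x = ∑ j, (t j) • ((a j : ↥P₁) : ME₁) := by
        rw [hxsum]
        apply Finset.sum_congr rfl
        intro j _
        have h8 := ht j
        rw [Algebra.linearMap_apply, hcoeff j] at h8
        rw [← algebraMap_smul E (t j) ((a j : ↥P₁) : ME₁), h8]
      rw [hxt]
      exact Submodule.sum_mem _ (fun j _ => Submodule.smul_mem _ _ (a j).2)
    refine ⟨Submodule.Quotient.mk (⟨x, hxP⟩ : ↥P₁), ?_⟩
    apply LinearMap.ext; intro zq
    obtain ⟨yq, rfl⟩ := Submodule.Quotient.mk_surjective _ zq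
    rw [Bbar_apply]
    rw [show ((⟨x, hxP⟩ : ↥P₁) : ME₁) = x from rfl, hxy yq]
    exact hfE yq



end MainAux

lemma isReduced_of_isLocalization (T : Type*) [CommRing T] [IsReduced T] (M : Submonoid T)
    (TE : Type*) [CommRing TE] [Algebra T TE] [IsLocalization M TE] : IsReduced TE := by
  constructor
  rintro x ⟨_ | n, hxn⟩
  · simpa using congr_arg (· * x) hxn
  obtain ⟨⟨y, m⟩, hx⟩ := IsLocalization.surj M x
  dsimp only at hx
  let hx' := congr_arg (· ^ n.succ) hx
  simp only [mul_pow, hxn, zero_mul, ← RingHom.map_pow] at hx'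
  rw [← (algebraMap T TE).map_zero] at hx'
  obtain ⟨m', hm'⟩ := (IsLocalization.eq_iff_exists M TE).mp hx'
  apply_fun (· * (m' : T) ^ n) at hm'
  simp only [mul_assoc, zero_mul, mul_zero] at hm'
  rw [← mul_left_comm, ← pow_succ', ← mul_pow] at hm'
  replace hm' := IsNilpotent.eq_zero ⟨_, hm'.symm⟩
  rw [← (IsLocalization.map_units TE m).mul_left_inj, hx, zero_mul,
    IsLocalization.map_eq_zero_iff M]
  exact ⟨m', by rw [← hm', mul_comm]⟩


/-- `𝒪` is a complete DVR with fraction field `E`; `T` and `T̃` are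
commutative reduced finite flat local `𝒪`-algebras with `𝒪`-algebra homomorphisms
`λ, λ̃` to `𝒪` and attached idempotents `e ∈ T_E`, `ẽ ∈ T̃_E`; `M₁`, `M₂` are finitely
generated modules over `T`, `T̃` respectively, free over `𝒪`, with a perfect `𝒪`-bilinear
pairing `[·,·] : M₁ × M₂ → 𝒪` whose `E`-bilinear extension satisfies
`[eM₁, (1−ẽ)M₂] = 0 = [(1−e)M₁, ẽM₂]`.  Then `[·,·]` induces a well-defined perfect
pairing `C₀^λ(M₁) × C₀^{λ̃}(M₂) → E/𝒪` on the congruence modules, given on classes by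
`(e·m₁, ẽ·m₂) ↦ [e·m₁, ẽ·m₂] mod 𝒪`; consequently `η_λ(M₁) = η_{λ̃}(M₂)`. -/
theorem statement10
    {O : Type*} [CommRing O] [IsDomain O] [IsDiscreteValuationRing O]
    [IsAdicComplete (IsLocalRing.maximalIdeal O) O]
    {E : Type*} [Field E] [Algebra O E] [IsFractionRing O E]
    {T : Type*} [CommRing T] [IsReduced T] [IsLocalRing T]
    [Algebra O T] [Module.Finite O T] [Module.Flat O T]
    (lam : T →ₐ[O] O)
    {TE : Type*} [CommRing TE] [Algebra T TE] [Algebra O TE] [Algebra E TE]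
    [IsScalarTower O T TE] [IsScalarTower O E TE]
    [IsLocalization (Algebra.algebraMapSubmonoid T (nonZeroDivisors O)) TE]
    (lamE : TE →ₐ[E] E) (e : TE)
    (hlamE : ∀ t : T, lamE (algebraMap T TE t) = algebraMap O E (lam t))
    (he1 : lamE e = 1)
    (he2 : ∀ P : Ideal TE, P.IsPrime → P ≠ RingHom.ker lamE → e ∈ P)
    {T' : Type*} [CommRing T'] [IsReduced T'] [IsLocalRing T']
    [Algebra O T'] [Module.Finite O T'] [Module.Flat O T']
    (lam' : T' →ₐ[O] O)
    {TE' : Type*} [CommRing TE'] [Algebra T' TE'] [Algebra O TE'] [Algebra E TE']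
    [IsScalarTower O T' TE'] [IsScalarTower O E TE']
    [IsLocalization (Algebra.algebraMapSubmonoid T' (nonZeroDivisors O)) TE']
    (lamE' : TE' →ₐ[E] E) (e' : TE')
    (hlamE' : ∀ t : T', lamE' (algebraMap T' TE' t) = algebraMap O E (lam' t))
    (he1' : lamE' e' = 1)
    (he2' : ∀ P : Ideal TE', P.IsPrime → P ≠ RingHom.ker lamE' → e' ∈ P)
    {M₁ : Type*} [AddCommGroup M₁] [Module O M₁] [Module T M₁] [IsScalarTower O T M₁]
    [Module.Finite T M₁] [Module.Free O M₁]
    {ME₁ : Type*} [AddCommGroup ME₁] [Module O ME₁] [Module E ME₁] [Module TE ME₁]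
    [IsScalarTower O TE ME₁] [IsScalarTower O E ME₁] [IsScalarTower E TE ME₁]
    (iota₁ : M₁ →ₗ[O] ME₁) [IsLocalizedModule (nonZeroDivisors O) iota₁]
    (hiota₁ : ∀ (t : T) (m : M₁), iota₁ (t • m) = algebraMap T TE t • iota₁ m)
    {M₂ : Type*} [AddCommGroup M₂] [Module O M₂] [Module T' M₂] [IsScalarTower O T' M₂]
    [Module.Finite T' M₂] [Module.Free O M₂]
    {ME₂ : Type*} [AddCommGroup ME₂] [Module O ME₂] [Module E ME₂] [Module TE' ME₂]
    [IsScalarTower O TE' ME₂] [IsScalarTower O E ME₂] [IsScalarTower E TE' ME₂]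
    (iota₂ : M₂ →ₗ[O] ME₂) [IsLocalizedModule (nonZeroDivisors O) iota₂]
    (hiota₂ : ∀ (t : T') (m : M₂), iota₂ (t • m) = algebraMap T' TE' t • iota₂ m)
    (B : M₁ →ₗ[O] M₂ →ₗ[O] O)
    (hB : Function.Bijective B) (hBf : Function.Bijective B.flip)
    (BE : ME₁ →ₗ[E] ME₂ →ₗ[E] E)
    (hBE : ∀ (m : M₁) (m' : M₂), BE (iota₁ m) (iota₂ m') = algebraMap O E (B m m'))
    (horth₁ : ∀ (m : M₁) (m' : M₂), BE (e • iota₁ m) ((1 - e') • iota₂ m') = 0)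
    (horth₂ : ∀ (m : M₁) (m' : M₂), BE ((1 - e) • iota₁ m) (e' • iota₂ m') = 0) :
    ∃ Bbar : (C0M e iota₁) →ₗ[O] (C0M e' iota₂) →ₗ[O]
        (E ⧸ LinearMap.range (Algebra.linearMap O E)),
      (∀ (m : M₁) (m' : M₂), Bbar (clsM e iota₁ m) (clsM e' iota₂ m') =
        Submodule.Quotient.mk (BE (e • iota₁ m) (e' • iota₂ m'))) ∧
      Function.Bijective Bbar ∧ Function.Bijective Bbar.flip ∧
      fittingIdeal O (C0M e iota₁) = fittingIdeal O (C0M e' iota₂) := by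
  classical
  -- reducedness of the localizations, hence idempotency of e, e'
  haveI hredTE : IsReduced TE :=
    isReduced_of_isLocalization T (Algebra.algebraMapSubmonoid T (nonZeroDivisors O)) TE
  haveI hredTE' : IsReduced TE' :=
    isReduced_of_isLocalization T' (Algebra.algebraMapSubmonoid T' (nonZeroDivisors O)) TE'
  have hee : e * e = e := by
    have h1 : e - e * e ∈ nilradical TE := by
      rw [nilradical_eq_sInf]
      apply Submodule.mem_sInf.2
      intro P hP
      by_cases hPk : P = RingHom.ker lamE
      · subst hPk
        rw [RingHom.mem_ker, map_sub, map_mul, he1, mul_one, sub_self]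
      · have he := he2 P hP hPk
        have hfact : e - e * e = e * (1 - e) := by ring
        rw [hfact]
        exact Ideal.mul_mem_right _ P he
    have h2 : e - e * e = 0 := IsNilpotent.eq_zero (mem_nilradical.1 h1)
    have := sub_eq_zero.1 h2
    exact this.symm
  have hee' : e' * e' = e' := by
    have h1 : e' - e' * e' ∈ nilradical TE' := by
      rw [nilradical_eq_sInf]
      apply Submodule.mem_sInf.2
      intro P hP
      by_cases hPk : P = RingHom.ker lamE'
      · subst hPk
        rw [RingHom.mem_ker, map_sub, map_mul, he1', mul_one, sub_self]
      · have he := he2' P hP hPk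
        have hfact : e' - e' * e' = e' * (1 - e') := by ring
        rw [hfact]
        exact Ideal.mul_mem_right _ P he
    have h2 : e' - e' * e' = 0 := IsNilpotent.eq_zero (mem_nilradical.1 h1)
    exact (sub_eq_zero.1 h2).symm
  -- finiteness over O
  haveI hM1fin : Module.Finite O M₁ := Module.Finite.trans T M₁
  haveI hM2fin : Module.Finite O M₂ := Module.Finite.trans T' M₂
  -- flipped data
  have hBEflip : ∀ (m' : M₂) (m : M₁),
      BE.flip (iota₂ m') (iota₁ m) = algebraMap O E (B.flip m' m) := by
    intro m' m
    simp only [LinearMap.flip_apply]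
    exact hBE m m'
  -- the two pairings
  obtain ⟨Bb, hBb, hBbbij⟩ := aux_pairing e hee e' hee' iota₁ iota₂ B hB hBf BE hBE horth₁ horth₂
  obtain ⟨Bb', hBb', hBb'bij⟩ := aux_pairing e' hee' e hee iota₂ iota₁ B.flip hBf
    (by rw [LinearMap.flip_flip]; exact hB) BE.flip hBEflip
    (fun m' m => by rw [LinearMap.flip_apply]; exact horth₂ m m')
    (fun m' m => by rw [LinearMap.flip_apply]; exact horth₁ m m')
  have hflip : Bb.flip = Bb' := by
    apply LinearMap.ext; intro z
    apply LinearMap.ext; intro w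
    obtain ⟨m', rfl⟩ := clsM_surjective e' iota₂ z
    obtain ⟨m, rfl⟩ := clsM_surjective e iota₁ w
    rw [LinearMap.flip_apply, hBb m m', hBb' m' m, LinearMap.flip_apply]
  -- torsionness and finiteness of C0M e' iota₂
  haveI hC2fin : Module.Finite O (C0M e' iota₂) :=
    Module.Finite.of_surjective
      ((Submodule.comap (eMsub e' iota₂).subtype
          (eMsub e' iota₂ ⊓ LinearMap.range iota₂)).mkQ ∘ₗ jsub e' iota₂)
      ((Submodule.Quotient.mk_surjective _).comp (jsub_surjective e' iota₂))
  obtain ⟨⟨t', s'⟩, hts'⟩ :=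
    IsLocalization.surj (Algebra.algebraMapSubmonoid T' (nonZeroDivisors O)) e'
  obtain ⟨s₀, hs₀mem, hs₀⟩ := s'.2
  have htors : Module.IsTorsion O (C0M e' iota₂) := by
    intro zc
    obtain ⟨m', rfl⟩ := clsM_surjective e' iota₂ zc
    refine ⟨⟨s₀, hs₀mem⟩, ?_⟩
    show (s₀ : O) • (Submodule.Quotient.mk
      (⟨e' • iota₂ m', Submodule.subset_span ⟨m', rfl⟩⟩ :
        ↥(eMsub e' iota₂)) : C0M e' iota₂) = 0
    rw [← Submodule.Quotient.mk_smul, Submodule.Quotient.mk_eq_zero]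
    have hval : s₀ • (e' • iota₂ m') = iota₂ (t' • m') := by
      calc s₀ • (e' • iota₂ m') = e' • (s₀ • iota₂ m') := smul_comm _ _ _
        _ = e' • ((algebraMap O TE' s₀) • iota₂ m') := by rw [algebraMap_smul]
        _ = e' • ((algebraMap T' TE' (algebraMap O T' s₀)) • iota₂ m') := by
            rw [← IsScalarTower.algebraMap_apply]
        _ = e' • ((algebraMap T' TE' (s' : T')) • iota₂ m') := by rw [hs₀]
        _ = (e' * algebraMap T' TE' (s' : T')) • iota₂ m' := by rw [smul_smul]
        _ = (algebraMap T' TE' t') • iota₂ m' := by rw [hts']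
        _ = iota₂ (t' • m') := (hiota₂ t' m').symm
    constructor
    · show (s₀ : O) • (e' • iota₂ m') ∈ eMsub e' iota₂
      exact Submodule.smul_mem _ _ (Submodule.subset_span ⟨m', rfl⟩)
    · show (s₀ : O) • (e' • iota₂ m') ∈ LinearMap.range iota₂
      exact ⟨t' • m', hval.symm⟩
  obtain ⟨dq⟩ := exists_dual_equiv (E := E) (C0M e' iota₂) htors
  refine ⟨Bb, hBb, hBbbij, ?_, ?_⟩
  · rw [hflip]; exact hBb'bij
  · exact (fittingIdeal_congr (LinearEquiv.ofBijective Bb hBbbij)).trans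
      (fittingIdeal_congr dq)
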